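/- Assume γ, η ≤ 1/10 and let (A,B) ∈ I be a (γ,η)-good edge. Then a random B' ∼ W_I(A) is likely to belong to a large bucket: Pr_{B'∼W_I(A)}[B' belongs to a large bucket Γ_i for some 0 ≤ i ≤ ℓ] ≥ 1/2. -/
import Mathlib

open Finset
open scoped Classical
namespace IJKW
noncomputable def prEvent {n : ℕ} (D : ((Fin n → Bool) → Bool) → ℝ)
    (E : ((Fin n → Bool) → Bool) → Prop) : ℝ :=
  ∑ v : (Fin n → Bool) → Bool, if E v then D v else 0
def Sk (n k : ℕ) : Finset (Finset (Fin n → Bool)) :=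
  Finset.univ.filter fun B => B.card = k
noncomputable def Corr {n : ℕ} (g : (Fin n → Bool) → Bool)
    (G : Finset (Fin n → Bool) → ((Fin n → Bool) → Bool) → ℝ)
    (B : Finset (Fin n → Bool)) : ℝ :=
  prEvent (G B) fun v => ∀ x ∈ B, v x = g x
def NI (n k : ℕ) (A : Finset (Fin n → Bool)) : Finset (Finset (Fin n → Bool)) :=
  (Sk n k).filter fun B => A ⊆ B
def NIx (n k : ℕ) (A : Finset (Fin n → Bool)) (x : Fin n → Bool) :
    Finset (Finset (Fin n → Bool)) :=
  (Sk n k).filter fun B => A ⊆ B ∧ x ∈ B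
def Edges (n k : ℕ) : Finset (Finset (Fin n → Bool) × Finset (Fin n → Bool)) :=
  Finset.univ.filter fun p => p.1.card = k / 2 ∧ p.2.card = k ∧ p.1 ⊆ p.2
noncomputable def pcons {n : ℕ} (g : (Fin n → Bool) → Bool)
    (G : Finset (Fin n → Bool) → ((Fin n → Bool) → Bool) → ℝ)
    (A B : Finset (Fin n → Bool)) : ℝ :=
  prEvent (G B) fun v => ∀ a ∈ A, v a = g a
def IsGood {n : ℕ} (g : (Fin n → Bool) → Bool)
    (G : Finset (Fin n → Bool) → ((Fin n → Bool) → Bool) → ℝ)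
    (k : ℕ) (γ η : ℝ) (A B : Finset (Fin n → Bool)) : Prop :=
  η ≤ Corr g G B ∧
    γ ≤ (((NI n k A).filter fun B' => η ≤ Corr g G B').card : ℝ) / ((NI n k A).card : ℝ)

-- extra definitions
/-- `p_tot(A) = ∑_{B' ∈ N_I(A)} p_cons(B')`. -/
noncomputable def ptot {n : ℕ} (g : (Fin n → Bool) → Bool)
    (G : Finset (Fin n → Bool) → ((Fin n → Bool) → Bool) → ℝ)
    (k : ℕ) (A : Finset (Fin n → Bool)) : ℝ :=
  ∑ B ∈ NI n k A, pcons g G A B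

/-- Expectation of `F` under the distribution `W_I(A)`, which assigns `B' ∈ N_I(A)` the
probability `p_cons(B') / p_tot(A)`. -/
noncomputable def Wexp {n : ℕ} (g : (Fin n → Bool) → Bool)
    (G : Finset (Fin n → Bool) → ((Fin n → Bool) → Bool) → ℝ)
    (k : ℕ) (A : Finset (Fin n → Bool)) (F : Finset (Fin n → Bool) → ℝ) : ℝ :=
  (∑ B ∈ NI n k A, pcons g G A B * F B) / ptot g G k A

/-- `p_err(x, B') = Pr_{v ∼ 𝒢(B')}[v|_x ≠ g(x) ∣ v|_A = g^{k/2}(A)]`. -/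
noncomputable def perr {n : ℕ} (g : (Fin n → Bool) → Bool)
    (G : Finset (Fin n → Bool) → ((Fin n → Bool) → Bool) → ℝ)
    (A : Finset (Fin n → Bool)) (x : Fin n → Bool) (B : Finset (Fin n → Bool)) : ℝ :=
  prEvent (G B) (fun v => v x ≠ g x ∧ ∀ a ∈ A, v a = g a) / pcons g G A B

/-- `ErrCons(A, B') = E_{x ∼ uniform on B'∖A}[p_err(x, B')]`. -/
noncomputable def ErrCons {n : ℕ} (g : (Fin n → Bool) → Bool)
    (G : Finset (Fin n → Bool) → ((Fin n → Bool) → Bool) → ℝ)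
    (A B : Finset (Fin n → Bool)) : ℝ :=
  (∑ x ∈ B \ A, perr g G A x B) / ((B \ A).card : ℝ)

/-- An edge `(A,B)` is `(γ,η,α)`-excellent if it is `(γ,η)`-good and
`E_{B' ∼ W_I(A)}[ErrCons(A,B')] ≤ α`. -/
def IsExcellent {n : ℕ} (g : (Fin n → Bool) → Bool)
    (G : Finset (Fin n → Bool) → ((Fin n → Bool) → Bool) → ℝ)
    (k : ℕ) (γ η α : ℝ) (A B : Finset (Fin n → Bool)) : Prop :=
  IsGood g G k γ η A B ∧ Wexp g G k A (fun B' => ErrCons g G A B') ≤ α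

/-- `p_tot(x) = ∑_{B ∈ N_I(A,x)} p_cons(B)`. -/
noncomputable def ptotx {n : ℕ} (g : (Fin n → Bool) → Bool)
    (G : Finset (Fin n → Bool) → ((Fin n → Bool) → Bool) → ℝ)
    (k : ℕ) (A : Finset (Fin n → Bool)) (x : Fin n → Bool) : ℝ :=
  ∑ B ∈ NIx n k A x, pcons g G A B

/-- `h(x) = ∑_{B ∈ N_I(A,x)} p_err(x,B) · p_used(x,B)` with `p_used(x,B) = p_cons(B)/p_tot(x)`. -/
noncomputable def hFn {n : ℕ} (g : (Fin n → Bool) → Bool)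
    (G : Finset (Fin n → Bool) → ((Fin n → Bool) → Bool) → ℝ)
    (k : ℕ) (A : Finset (Fin n → Bool)) (x : Fin n → Bool) : ℝ :=
  ∑ B ∈ NIx n k A x, perr g G A x B * (pcons g G A B / ptotx g G k A x)

/-- `μ(B') = E_{x ∼ uniform on B'∖A}[h(x)]`. -/
noncomputable def muFn {n : ℕ} (g : (Fin n → Bool) → Bool)
    (G : Finset (Fin n → Bool) → ((Fin n → Bool) → Bool) → ℝ)
    (k : ℕ) (A B' : Finset (Fin n → Bool)) : ℝ :=
  (∑ x ∈ B' \ A, hFn g G k A x) / ((B' \ A).card : ℝ)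

/-- The bucket `Γ_i = {B' ∈ N_I(A) : 2^{-i-1} < p_cons(B') ≤ 2^{-i}}`. -/
noncomputable def Gam {n : ℕ} (g : (Fin n → Bool) → Bool)
    (G : Finset (Fin n → Bool) → ((Fin n → Bool) → Bool) → ℝ)
    (k : ℕ) (A : Finset (Fin n → Bool)) (i : ℕ) : Finset (Finset (Fin n → Bool)) :=
  (NI n k A).filter fun B' =>
    ((2 : ℝ) ^ (i + 1))⁻¹ < pcons g G A B' ∧ pcons g G A B' ≤ ((2 : ℝ) ^ i)⁻¹

/-- The exceptional bucket `Γ_{ℓ+1} = {B' ∈ N_I(A) : p_cons(B') ≤ 2^{-ℓ-1}}`, where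
`ℓ = ⌈5·log₂(1/(γη))⌉`. -/
noncomputable def GamTop {n : ℕ} (g : (Fin n → Bool) → Bool)
    (G : Finset (Fin n → Bool) → ((Fin n → Bool) → Bool) → ℝ)
    (k : ℕ) (A : Finset (Fin n → Bool)) (γ η : ℝ) : Finset (Finset (Fin n → Bool)) :=
  (NI n k A).filter fun B' =>
    pcons g G A B' ≤ ((2 : ℝ) ^ (⌈5 * Real.logb 2 (1 / (γ * η))⌉₊ + 1))⁻¹

/-- The probability that one iteration of the decoder `C_{A,w}` on input `x ∉ A` halts,
i.e. that for `B'` uniform on `N_I(A,x)` and `v ∼ 𝒢(B')` we have `v|_A = w`. -/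
noncomputable def phalt {n : ℕ}
    (G : Finset (Fin n → Bool) → ((Fin n → Bool) → Bool) → ℝ)
    (k : ℕ) (A : Finset (Fin n → Bool)) (w : (Fin n → Bool) → Bool) (x : Fin n → Bool) : ℝ :=
  (∑ B ∈ NIx n k A x, prEvent (G B) fun v => ∀ a ∈ A, v a = w a) / ((NIx n k A x).card : ℝ)

/-- The probability that one iteration of the decoder `C_{A,w}` on input `x ∉ A` halts with
output bit `b`. -/
noncomputable def phaltBit {n : ℕ}
    (G : Finset (Fin n → Bool) → ((Fin n → Bool) → Bool) → ℝ)
    (k : ℕ) (A : Finset (Fin n → Bool)) (w : (Fin n → Bool) → Bool) (x : Fin n → Bool)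
    (b : Bool) : ℝ :=
  (∑ B ∈ NIx n k A x, prEvent (G B) fun v => (∀ a ∈ A, v a = w a) ∧ v x = b) /
    ((NIx n k A x).card : ℝ)

/-- The probability that the randomized decoder `C_{A,w}` with `T` iterations outputs the
bit `b` on input `x`.  For `x ∈ A` it deterministically outputs `w|_x`; otherwise, the `i`-th
iteration is reached with probability `(1 - phalt)^{i-1}` and halts with output `b` with
probability `phaltBit b`. -/
noncomputable def probOutEq {n : ℕ}
    (G : Finset (Fin n → Bool) → ((Fin n → Bool) → Bool) → ℝ)
    (k : ℕ) (A : Finset (Fin n → Bool)) (T : ℕ) (w : (Fin n → Bool) → Bool)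
    (x : Fin n → Bool) (b : Bool) : ℝ :=
  if x ∈ A then (if w x = b then 1 else 0)
  else phaltBit G k A w x b * ∑ i ∈ Finset.range T, (1 - phalt G k A w x) ^ i

/-- The probability that the randomized decoder `C_{A,w}` with `T` iterations outputs `⊥`
on input `x`. -/
noncomputable def probOutBot {n : ℕ}
    (G : Finset (Fin n → Bool) → ((Fin n → Bool) → Bool) → ℝ)
    (k : ℕ) (A : Finset (Fin n → Bool)) (T : ℕ) (w : (Fin n → Bool) → Bool)
    (x : Fin n → Bool) : ℝ :=
  if x ∈ A then 0 else (1 - phalt G k A w x) ^ T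

/-- `B''` is `A`-heavy: `Pr_{v ∼ 𝒢(B''), x ∼ uniform on B''∖A}[v|_x ≠ g(x) ∣ v|_A = g^{k/2}(A)]
  > α/2`. -/
noncomputable def IsHeavy {n : ℕ} (g : (Fin n → Bool) → Bool)
    (G : Finset (Fin n → Bool) → ((Fin n → Bool) → Bool) → ℝ)
    (A : Finset (Fin n → Bool)) (α : ℝ) (B'' : Finset (Fin n → Bool)) : Prop :=
  α / 2 <
    ((∑ x ∈ B'' \ A, prEvent (G B'') fun v => v x ≠ g x ∧ ∀ a ∈ A, v a = g a) /
        ((B'' \ A).card : ℝ)) / pcons g G A B''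



lemma prEvent_nonneg {n : ℕ} {D : ((Fin n → Bool) → Bool) → ℝ}
    (hD : ∀ v, 0 ≤ D v) (E : ((Fin n → Bool) → Bool) → Prop) : 0 ≤ prEvent D E := by
  refine Finset.sum_nonneg fun v _ => ?_
  split_ifs
  · exact hD v
  · exact le_rfl

lemma prEvent_le_one {n : ℕ} {D : ((Fin n → Bool) → Bool) → ℝ}
    (hD : ∀ v, 0 ≤ D v) (hs : ∑ v, D v = 1)
    (E : ((Fin n → Bool) → Bool) → Prop) : prEvent D E ≤ 1 := by
  rw [← hs]
  refine Finset.sum_le_sum fun v _ => ?_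
  split_ifs
  · exact le_rfl
  · exact hD v

lemma prEvent_mono {n : ℕ} {D : ((Fin n → Bool) → Bool) → ℝ}
    (hD : ∀ v, 0 ≤ D v) {E E' : ((Fin n → Bool) → Bool) → Prop}
    (h : ∀ v, E v → E' v) : prEvent D E ≤ prEvent D E' := by
  refine Finset.sum_le_sum fun v _ => ?_
  split_ifs with h1 h2
  · exact le_rfl
  · exact absurd (h v h1) h2
  · exact hD v
  · exact le_rfl

set_option maxHeartbeats 800000 in
/-- Assume `γ, η ≤ 1/10` and let `(A,B) ∈ I` be a `(γ,η)`-good edge.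
Then a random `B' ∼ W_I(A)` belongs to a large bucket `Γ_i` (i.e. one with
`|Γ_i| ≥ (γη)^5·|N_I(A)|`) for some `0 ≤ i ≤ ℓ` (with `ℓ = ⌈5·log₂(1/(γη))⌉`) with
probability at least `1/2`. -/
theorem large_buckets_carry_half_the_weight
    (n k : ℕ) (hn : 0 < n) (hk : 0 < k) (hkeven : Even k) (hk2 : k ≤ 2 ^ n)
    (g : (Fin n → Bool) → Bool)
    (G : Finset (Fin n → Bool) → ((Fin n → Bool) → Bool) → ℝ)
    (hGnn : ∀ B ∈ Sk n k, ∀ v, 0 ≤ G B v)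
    (hGsum : ∀ B ∈ Sk n k, ∑ v, G B v = 1)
    (hGpos : ∀ B ∈ Sk n k, 0 < Corr g G B)
    (γ η : ℝ) (hγ0 : 0 < γ) (hη0 : 0 < η) (hγ : γ ≤ 1 / 10) (hη : η ≤ 1 / 10)
    (A B : Finset (Fin n → Bool)) (hAB : (A, B) ∈ Edges n k)
    (hgood : IsGood g G k γ η A B) :
    1 / 2 ≤
      (∑ B' ∈ (NI n k A).filter fun B' =>
            ∃ i : ℕ, i ≤ ⌈5 * Real.logb 2 (1 / (γ * η))⌉₊ ∧
              (γ * η) ^ 5 * ((NI n k A).card : ℝ) ≤ ((Gam g G k A i).card : ℝ) ∧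
              B' ∈ Gam g G k A i,
          pcons g G A B') / ptot g G k A := by
  classical
  set L := ⌈5 * Real.logb 2 (1 / (γ * η))⌉₊ with hLdef
  have hγη0 : 0 < γ * η := mul_pos hγ0 hη0
  have hNIsk : ∀ B' ∈ NI n k A, B' ∈ Sk n k := fun B' h => (Finset.mem_filter.mp h).1
  have two_pow_pos : ∀ m : ℕ, (0:ℝ) < 2 ^ m := fun m => by positivity
  -- nonnegativity and boundedness of pcons
  have hp_nonneg : ∀ B' ∈ NI n k A, 0 ≤ pcons g G A B' :=
    fun B' hB' => prEvent_nonneg (hGnn B' (hNIsk B' hB')) _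
  have hp_le_one : ∀ B' ∈ NI n k A, pcons g G A B' ≤ 1 :=
    fun B' hB' => prEvent_le_one (hGnn B' (hNIsk B' hB')) (hGsum B' (hNIsk B' hB')) _
  have hCle : ∀ B' ∈ NI n k A, Corr g G B' ≤ pcons g G A B' := by
    intro B' hB'
    have hA : A ⊆ B' := (Finset.mem_filter.mp hB').2
    exact prEvent_mono (hGnn B' (hNIsk B' hB')) (fun v hv a ha => hv a (hA ha))
  have hp_pos : ∀ B' ∈ NI n k A, 0 < pcons g G A B' :=
    fun B' hB' => lt_of_lt_of_le (hGpos B' (hNIsk B' hB')) (hCle B' hB')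
  -- N_I(A) is nonempty
  have hNIne : 0 < (NI n k A).card := by
    rcases Nat.eq_zero_or_pos (NI n k A).card with h | h
    · exfalso
      have hNI : NI n k A = ∅ := Finset.card_eq_zero.mp h
      have h2 := hgood.2
      rw [hNI] at h2
      simp at h2
      linarith
    · exact h
  have hN0 : (0:ℝ) < ((NI n k A).card : ℝ) := by exact_mod_cast hNIne
  -- lower bound for ptot
  have hptot_ge : γ * η * ((NI n k A).card : ℝ) ≤ ptot g G k A := by
    have hMF : γ * ((NI n k A).card : ℝ)
        ≤ (((NI n k A).filter fun B' => η ≤ Corr g G B').card : ℝ) :=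
      (le_div_iff₀ hN0).mp hgood.2
    have h1 : ∀ B' ∈ (NI n k A).filter fun B' => η ≤ Corr g G B', η ≤ pcons g G A B' :=
      fun B' hB' => le_trans (Finset.mem_filter.mp hB').2
        (hCle B' (Finset.mem_filter.mp hB').1)
    calc γ * η * ((NI n k A).card : ℝ) = η * (γ * ((NI n k A).card : ℝ)) := by ring
      _ ≤ η * (((NI n k A).filter fun B' => η ≤ Corr g G B').card : ℝ) :=
          mul_le_mul_of_nonneg_left hMF hη0.le
      _ = ∑ _B' ∈ (NI n k A).filter fun B' => η ≤ Corr g G B', η := by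
          rw [Finset.sum_const, nsmul_eq_mul, mul_comm]
      _ ≤ ∑ B' ∈ (NI n k A).filter fun B' => η ≤ Corr g G B', pcons g G A B' :=
          Finset.sum_le_sum h1
      _ ≤ ∑ B' ∈ NI n k A, pcons g G A B' :=
          Finset.sum_le_sum_of_subset_of_nonneg (Finset.filter_subset _ _)
            (fun B' hB' _ => hp_nonneg B' hB')
      _ = ptot g G k A := rfl
  have hptot_pos : 0 < ptot g G k A :=
    lt_of_lt_of_le (by positivity) hptot_ge
  -- key : (2^L)⁻¹ ≤ (γ*η)^5
  have hkey : ((2:ℝ) ^ L)⁻¹ ≤ (γ * η) ^ 5 := by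
    have h1 : 5 * Real.logb 2 (1 / (γ * η)) ≤ (L : ℝ) := Nat.le_ceil _
    have h2 : ((1 / (γ * η)) : ℝ) ^ (5:ℕ) ≤ (2:ℝ) ^ L := by
      have hmono := Real.rpow_le_rpow_of_exponent_le (by norm_num : (1:ℝ) ≤ 2) h1
      calc (1 / (γ * η)) ^ (5:ℕ)
          = (2:ℝ) ^ (5 * Real.logb 2 (1 / (γ * η))) := by
            rw [mul_comm (5:ℝ), Real.rpow_mul (by norm_num : (0:ℝ) ≤ 2),
              Real.rpow_logb (by norm_num) (by norm_num) (by positivity),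
              ← Real.rpow_natCast (1 / (γ * η)) 5]
            norm_num
        _ ≤ (2:ℝ) ^ ((L:ℕ):ℝ) := hmono
        _ = (2:ℝ) ^ L := Real.rpow_natCast 2 L
    rw [inv_le_comm₀ (two_pow_pos L) (by positivity)]
    calc ((γ*η)^5)⁻¹ = (1/(γ*η))^(5:ℕ) := by rw [one_div, inv_pow]
      _ ≤ _ := h2
  -- the set of "large-bucket" elements
  set S := (NI n k A).filter (fun B' =>
    ∃ i : ℕ, i ≤ L ∧ (γ * η) ^ 5 * ((NI n k A).card : ℝ) ≤ ((Gam g G k A i).card : ℝ) ∧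
      B' ∈ Gam g G k A i) with hSdef
  -- buckets are pairwise disjoint
  have hGamDisj : ∀ i j : ℕ, i < j → Disjoint (Gam g G k A i) (Gam g G k A j) := by
    intro i j hij
    rw [Finset.disjoint_left]
    intro B' hi hj
    have h1 := (Finset.mem_filter.mp hi).2.1
    have h2 := (Finset.mem_filter.mp hj).2.2
    have h3 : ((2:ℝ)^j)⁻¹ ≤ ((2:ℝ)^(i+1))⁻¹ := by
      apply inv_anti₀ (two_pow_pos _)
      exact pow_le_pow_right₀ (by norm_num) hij
    linarith
  -- bad elements with large pcons lie in some bucket Γ_i, i ≤ L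
  have hcover : ∀ B' ∈ (NI n k A) \ S, ¬ (pcons g G A B' ≤ ((2:ℝ)^(L+1))⁻¹) →
      ∃ i, i ∈ Finset.range (L+1) ∧ B' ∈ Gam g G k A i := by
    intro B' hB' hq
    push_neg at hq
    have hB'NI : B' ∈ NI n k A := (Finset.mem_sdiff.mp hB').1
    have hle1 : pcons g G A B' ≤ 1 := hp_le_one B' hB'NI
    have hex : ∃ j : ℕ, ((2:ℝ)^(j+1))⁻¹ < pcons g G A B' := ⟨L, hq⟩
    have hiL : Nat.find hex ≤ L := Nat.find_le hq
    have hPi : ((2:ℝ)^(Nat.find hex + 1))⁻¹ < pcons g G A B' := Nat.find_spec hex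
    have hupper : pcons g G A B' ≤ ((2:ℝ)^(Nat.find hex))⁻¹ := by
      rcases Nat.eq_zero_or_pos (Nat.find hex) with h0 | h0
      · rw [h0]; simpa using hle1
      · have hmin := Nat.find_min hex (Nat.sub_lt h0 one_pos)
        have hi1 : Nat.find hex - 1 + 1 = Nat.find hex := Nat.succ_pred_eq_of_pos h0
        rw [hi1] at hmin
        exact not_lt.mp hmin
    exact ⟨Nat.find hex, Finset.mem_range.mpr (Nat.lt_succ_of_le hiL),
      Finset.mem_filter.mpr ⟨hB'NI, hPi, hupper⟩⟩
  -- bound on the bad mass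
  have hBadBound : ∑ B' ∈ (NI n k A) \ S, pcons g G A B' ≤ (1/2) * ptot g G k A := by
    have hsplit := Finset.sum_filter_add_sum_filter_not ((NI n k A) \ S)
      (fun B' => pcons g G A B' ≤ ((2:ℝ)^(L+1))⁻¹) (pcons g G A)
    -- small-pcons part
    have hb1 : ∑ B' ∈ ((NI n k A) \ S).filter (fun B' => pcons g G A B' ≤ ((2:ℝ)^(L+1))⁻¹),
        pcons g G A B' ≤ ((NI n k A).card : ℝ) * ((2:ℝ)^(L+1))⁻¹ := by
      calc ∑ B' ∈ ((NI n k A) \ S).filter (fun B' => pcons g G A B' ≤ ((2:ℝ)^(L+1))⁻¹),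
            pcons g G A B'
          ≤ ∑ _B' ∈ ((NI n k A) \ S).filter (fun B' => pcons g G A B' ≤ ((2:ℝ)^(L+1))⁻¹),
            ((2:ℝ)^(L+1))⁻¹ :=
            Finset.sum_le_sum fun B' hB' => (Finset.mem_filter.mp hB').2
        _ = ((((NI n k A) \ S).filter
              (fun B' => pcons g G A B' ≤ ((2:ℝ)^(L+1))⁻¹)).card : ℝ) * ((2:ℝ)^(L+1))⁻¹ := by
            rw [Finset.sum_const, nsmul_eq_mul]
        _ ≤ ((NI n k A).card : ℝ) * ((2:ℝ)^(L+1))⁻¹ := by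
            apply mul_le_mul_of_nonneg_right _ (by positivity)
            have : (((NI n k A) \ S).filter
                (fun B' => pcons g G A B' ≤ ((2:ℝ)^(L+1))⁻¹)).card ≤ (NI n k A).card :=
              Finset.card_le_card ((Finset.filter_subset _ _).trans (Finset.sdiff_subset))
            exact_mod_cast this
    -- bucketed part
    have hsubset : ((NI n k A) \ S).filter (fun B' => ¬ (pcons g G A B' ≤ ((2:ℝ)^(L+1))⁻¹)) ⊆
        (Finset.range (L+1)).biUnion (fun i => ((NI n k A) \ S) ∩ Gam g G k A i) := by
      intro B' hB'
      obtain ⟨hBad, hq⟩ := Finset.mem_filter.mp hB'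
      obtain ⟨i, hi, hGi⟩ := hcover B' hBad hq
      exact Finset.mem_biUnion.mpr ⟨i, hi, Finset.mem_inter.mpr ⟨hBad, hGi⟩⟩
    have hbiU : ∑ B' ∈ (Finset.range (L+1)).biUnion
          (fun i => ((NI n k A) \ S) ∩ Gam g G k A i), pcons g G A B'
        = ∑ i ∈ Finset.range (L+1), ∑ B' ∈ ((NI n k A) \ S) ∩ Gam g G k A i,
            pcons g G A B' := by
      apply Finset.sum_biUnion
      intro i hi j hj hij
      rcases hij.lt_or_gt with h | h
      · exact (hGamDisj i j h).mono (Finset.inter_subset_right) (Finset.inter_subset_right)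
      · exact ((hGamDisj j i h).symm).mono (Finset.inter_subset_right) (Finset.inter_subset_right)
    have hbound3 : ∀ i ∈ Finset.range (L+1),
        ∑ B' ∈ ((NI n k A) \ S) ∩ Gam g G k A i, pcons g G A B'
          ≤ (γ*η)^5 * ((NI n k A).card : ℝ) * ((2:ℝ)⁻¹)^i := by
      intro i hi
      by_cases hlarge : (γ*η)^5 * ((NI n k A).card : ℝ) ≤ ((Gam g G k A i).card : ℝ)
      · have hempty : ((NI n k A) \ S) ∩ Gam g G k A i = ∅ := by
          rw [Finset.eq_empty_iff_forall_notMem]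
          intro B' hB'
          obtain ⟨hBad, hGi⟩ := Finset.mem_inter.mp hB'
          obtain ⟨hNI', hnS⟩ := Finset.mem_sdiff.mp hBad
          exact hnS (Finset.mem_filter.mpr
            ⟨hNI', i, Nat.lt_succ_iff.mp (Finset.mem_range.mp hi), hlarge, hGi⟩)
        rw [hempty, Finset.sum_empty]
        positivity
      · push_neg at hlarge
        calc ∑ B' ∈ ((NI n k A) \ S) ∩ Gam g G k A i, pcons g G A B'
            ≤ ∑ _B' ∈ ((NI n k A) \ S) ∩ Gam g G k A i, ((2:ℝ)^i)⁻¹ :=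
              Finset.sum_le_sum fun B' hB' =>
                (Finset.mem_filter.mp (Finset.mem_inter.mp hB').2).2.2
          _ = ((((NI n k A) \ S) ∩ Gam g G k A i).card : ℝ) * ((2:ℝ)^i)⁻¹ := by
              rw [Finset.sum_const, nsmul_eq_mul]
          _ ≤ ((Gam g G k A i).card : ℝ) * ((2:ℝ)^i)⁻¹ := by
              apply mul_le_mul_of_nonneg_right _ (by positivity)
              exact_mod_cast Finset.card_le_card (Finset.inter_subset_right)
          _ ≤ (γ*η)^5 * ((NI n k A).card : ℝ) * ((2:ℝ)⁻¹)^i := by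
              rw [← inv_pow]
              exact mul_le_mul_of_nonneg_right hlarge.le (by positivity)
    have hgeom : ∑ i ∈ Finset.range (L+1), ((2:ℝ)⁻¹)^i ≤ 2 := by
      have h := geom_sum_eq (by norm_num : ((2:ℝ)⁻¹) ≠ 1) (L+1)
      rw [h, div_le_iff_of_neg (by norm_num : (2⁻¹:ℝ) - 1 < 0)]
      have hx : (0:ℝ) ≤ (2⁻¹:ℝ)^(L+1) := by positivity
      linarith
    have hb2 : ∑ B' ∈ ((NI n k A) \ S).filter
          (fun B' => ¬ (pcons g G A B' ≤ ((2:ℝ)^(L+1))⁻¹)), pcons g G A B'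
        ≤ (γ*η)^5 * ((NI n k A).card : ℝ) * 2 := by
      calc ∑ B' ∈ ((NI n k A) \ S).filter
            (fun B' => ¬ (pcons g G A B' ≤ ((2:ℝ)^(L+1))⁻¹)), pcons g G A B'
          ≤ ∑ B' ∈ (Finset.range (L+1)).biUnion
              (fun i => ((NI n k A) \ S) ∩ Gam g G k A i), pcons g G A B' := by
            apply Finset.sum_le_sum_of_subset_of_nonneg hsubset
            intro B' hB' _
            exact hp_nonneg B' ((Finset.sdiff_subset).trans (fun x hx => hx) (Finset.mem_of_mem_inter_left (Finset.mem_biUnion.mp hB').choose_spec.2))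
        _ = ∑ i ∈ Finset.range (L+1), ∑ B' ∈ ((NI n k A) \ S) ∩ Gam g G k A i,
              pcons g G A B' := hbiU
        _ ≤ ∑ i ∈ Finset.range (L+1), (γ*η)^5 * ((NI n k A).card : ℝ) * ((2:ℝ)⁻¹)^i :=
            Finset.sum_le_sum hbound3
        _ = (γ*η)^5 * ((NI n k A).card : ℝ) * ∑ i ∈ Finset.range (L+1), ((2:ℝ)⁻¹)^i := by
            rw [Finset.mul_sum]
        _ ≤ (γ*η)^5 * ((NI n k A).card : ℝ) * 2 :=
            mul_le_mul_of_nonneg_left hgeom (by positivity)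
    -- combine
    have hL1 : ((2:ℝ)^(L+1))⁻¹ ≤ (γ*η)^5 * (1/2) := by
      rw [pow_succ, mul_inv]
      calc ((2:ℝ)^L)⁻¹ * (2:ℝ)⁻¹ ≤ (γ*η)^5 * (2:ℝ)⁻¹ :=
            mul_le_mul_of_nonneg_right hkey (by norm_num)
        _ = (γ*η)^5 * (1/2) := by norm_num
    have h100 : γ * η ≤ 1/100 := by nlinarith
    have hp4 : (γ*η)^4 ≤ (1/100)^4 := pow_le_pow_left₀ hγη0.le h100 4
    have hfin : (5/2) * (γ*η)^5 * ((NI n k A).card : ℝ)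
        ≤ (1/2) * (γ * η * ((NI n k A).card : ℝ)) := by
      have key : (5/2) * (γ*η)^5 ≤ (1/2) * (γ*η) := by nlinarith
      nlinarith
    have hbm1 : ((NI n k A).card : ℝ) * ((2:ℝ)^(L+1))⁻¹
        ≤ (γ*η)^5 * ((NI n k A).card : ℝ) * (1/2) := by
      calc ((NI n k A).card : ℝ) * ((2:ℝ)^(L+1))⁻¹
          ≤ ((NI n k A).card : ℝ) * ((γ*η)^5 * (1/2)) :=
            mul_le_mul_of_nonneg_left hL1 hN0.le
        _ = (γ*η)^5 * ((NI n k A).card : ℝ) * (1/2) := by ring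
    calc ∑ B' ∈ (NI n k A) \ S, pcons g G A B'
        = ∑ B' ∈ ((NI n k A) \ S).filter
              (fun B' => pcons g G A B' ≤ ((2:ℝ)^(L+1))⁻¹), pcons g G A B'
          + ∑ B' ∈ ((NI n k A) \ S).filter
              (fun B' => ¬ (pcons g G A B' ≤ ((2:ℝ)^(L+1))⁻¹)), pcons g G A B' := hsplit.symm
      _ ≤ (γ*η)^5 * ((NI n k A).card : ℝ) * (1/2)
          + (γ*η)^5 * ((NI n k A).card : ℝ) * 2 := add_le_add (hb1.trans hbm1) hb2
      _ = (5/2) * (γ*η)^5 * ((NI n k A).card : ℝ) := by ring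
      _ ≤ (1/2) * (γ * η * ((NI n k A).card : ℝ)) := hfin
      _ ≤ (1/2) * ptot g G k A := mul_le_mul_of_nonneg_left hptot_ge (by norm_num)
  -- conclude
  have hS_sub : S ⊆ NI n k A := Finset.filter_subset _ _
  have hsum_sdiff : ∑ B' ∈ (NI n k A) \ S, pcons g G A B' + ∑ B' ∈ S, pcons g G A B'
      = ∑ B' ∈ NI n k A, pcons g G A B' := Finset.sum_sdiff hS_sub
  have hptot_eq : ptot g G k A = ∑ B' ∈ NI n k A, pcons g G A B' := rfl
  rw [le_div_iff₀ hptot_pos]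
  linarith

end IJKW
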